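/- arXiv:2308.01024 — 3 statements merged into one kernel-verified Lean document; each statement's English description precedes it below -/
import Mathlib

section
/- Let n ≥ 1. Let A be an n×(n−1) spin matrix with guard qubits a_{i,−1} = +1 and a_{i,n−1} = −1, and let B be an (n−1)×n spin matrix with guard qubits b_{−1,j} = +1 and b_{n−1,j} = −1. Define Δa_{i,j} = a_{i,j−1} − a_{i,j} and Δb_{i,j} = b_{i−1,j} − b_{i,j} for 0 ≤ i, j ≤ n−1. Then the Hamiltonian H_d^{nn}(A,B) = (1/2)·Σ_{i,j} (Δa_{i,j})^2 + (1/2)·Σ_{i,j} (Δb_{i,j})^2 + (1/2)·Σ_{i,j} (Δa_{i,j} − Δb_{i,j})^2 (a rational number) satisfies H_d^{nn}(A,B) ≥ 4n, and H_d^{nn}(A,B) = 4n if and only if every guard-extended row of A is a spin domain-wall vector, every guard-extended column of B is a spin domain-wall vector, and Δa_{i,j} = Δb_{i,j} for all i, j. -/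
/-- Guard-extended row of the spin matrix `A` (rows of length `n-1`, guard qubits
`a_{i,-1} = +1` at shifted index `0` and `a_{i,n-1} = -1` at shifted index `n`). -/
def gA (n : ℕ) (A : ℕ → ℕ → ℤ) (i j : ℕ) : ℤ :=
  if j = 0 then 1 else if j < n then A i (j - 1) else -1

/-- `Δa_{i,j} = a_{i,j-1} - a_{i,j}` computed on the guard-extended rows of `A`. -/
def dA (n : ℕ) (A : ℕ → ℕ → ℤ) (i j : ℕ) : ℤ := gA n A i j - gA n A i (j + 1)

/-- Guard-extended column of the spin matrix `B` (columns of length `m-1`, guard qubits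
`b_{-1,j} = +1` at shifted index `0` and `b_{m-1,j} = -1` at shifted index `m`). -/
def gB (m : ℕ) (B : ℕ → ℕ → ℤ) (i j : ℕ) : ℤ :=
  if i = 0 then 1 else if i < m then B (i - 1) j else -1

/-- `Δb_{i,j} = b_{i-1,j} - b_{i,j}` computed on the guard-extended columns of `B`. -/
def dB (m : ℕ) (B : ℕ → ℕ → ℤ) (i j : ℕ) : ℤ := gB m B i j - gB m B (i + 1) j

/-- Row domain-wall condition: every guard-extended row of the `m × (n-1)` spin matrix `A`
is a spin domain-wall vector. -/
def RowDW (m n : ℕ) (A : ℕ → ℕ → ℤ) : Prop :=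
  ∀ i < m, ∃ t ≤ n - 1, ∀ j < n - 1, (j < t → A i j = 1) ∧ (t ≤ j → A i j = -1)

/-- Column domain-wall condition: every guard-extended column of the `(m-1) × n` spin
matrix `B` is a spin domain-wall vector. -/
def ColDW (m n : ℕ) (B : ℕ → ℕ → ℤ) : Prop :=
  ∀ j < n, ∃ t ≤ m - 1, ∀ i < m - 1, (i < t → B i j = 1) ∧ (t ≤ i → B i j = -1)

/-- The dual-matrix domain-wall Ising Hamiltonian
`H_dⁿⁿ(A,B) = ½ ΣΣ (Δa)² + ½ ΣΣ (Δb)² + ½ ΣΣ (Δa - Δb)²` over `0 ≤ i, j ≤ n-1`. -/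
def Hd (m n : ℕ) (A B : ℕ → ℕ → ℤ) : ℚ :=
  (1 / 2 : ℚ) * ∑ i ∈ Finset.range m, ∑ j ∈ Finset.range n, (dA n A i j : ℚ) ^ 2 +
  (1 / 2 : ℚ) * ∑ i ∈ Finset.range m, ∑ j ∈ Finset.range n, (dB m B i j : ℚ) ^ 2 +
  (1 / 2 : ℚ) * ∑ i ∈ Finset.range m, ∑ j ∈ Finset.range n,
    ((dA n A i j : ℚ) - (dB m B i j : ℚ)) ^ 2

lemma spin_step_sq {a b : ℤ} (ha : a = 1 ∨ a = -1) (hb : b = 1 ∨ b = -1) :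
    2 * (a - b) ≤ (a - b) ^ 2 := by
  rcases ha with h | h <;> rcases hb with h' | h' <;> subst h <;> subst h' <;> norm_num

lemma spin_step_sq_eq {a b : ℤ} (ha : a = 1 ∨ a = -1) (hb : b = 1 ∨ b = -1) :
    (a - b) ^ 2 = 2 * (a - b) ↔ b ≤ a := by
  rcases ha with h | h <;> rcases hb with h' | h' <;> subst h <;> subst h' <;> norm_num

lemma seq_bound (n : ℕ) (hn : 1 ≤ n) (g : ℕ → ℤ) (hg : ∀ j, g j = 1 ∨ g j = -1)
    (h0 : g 0 = 1) (hN : g n = -1) :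
    4 ≤ ∑ j ∈ Finset.range n, (g j - g (j + 1)) ^ 2 ∧
    ((∑ j ∈ Finset.range n, (g j - g (j + 1)) ^ 2) = 4 ↔
      ∃ t, 1 ≤ t ∧ t ≤ n ∧ ∀ j ≤ n, (j < t → g j = 1) ∧ (t ≤ j → g j = -1)) := by
  have htel : ∑ j ∈ Finset.range n, (2 * (g j - g (j + 1))) = 4 := by
    rw [← Finset.mul_sum, Finset.sum_range_sub' g, h0, hN]; ring
  have hpt : ∀ j ∈ Finset.range n, 2 * (g j - g (j + 1)) ≤ (g j - g (j + 1)) ^ 2 :=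
    fun j _ => spin_step_sq (hg j) (hg (j + 1))
  have hge : 4 ≤ ∑ j ∈ Finset.range n, (g j - g (j + 1)) ^ 2 := by
    calc (4:ℤ) = ∑ j ∈ Finset.range n, (2 * (g j - g (j + 1))) := htel.symm
    _ ≤ _ := Finset.sum_le_sum hpt
  refine ⟨hge, ?_, ?_⟩
  · intro heq
    have hall : ∀ j ∈ Finset.range n, 2 * (g j - g (j + 1)) = (g j - g (j + 1)) ^ 2 :=
      (Finset.sum_eq_sum_iff_of_le hpt).mp (by rw [heq, htel])
    have hmono : ∀ j < n, g (j + 1) ≤ g j := fun j hj =>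
      (spin_step_sq_eq (hg j) (hg (j + 1))).mp ((hall j (Finset.mem_range.mpr hj)).symm)
    have hex : ∃ j, g j = -1 := ⟨n, hN⟩
    have htspec : g (Nat.find hex) = -1 := Nat.find_spec hex
    have htle : Nat.find hex ≤ n := Nat.find_le hN
    have ht1 : 1 ≤ Nat.find hex := by
      by_contra h
      have h2 : Nat.find hex = 0 := by omega
      rw [h2, h0] at htspec; omega
    refine ⟨Nat.find hex, ht1, htle, ?_⟩
    have hafter : ∀ d, Nat.find hex + d ≤ n → g (Nat.find hex + d) = -1 := by
      intro d
      induction d with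
      | zero => intro _; simpa using htspec
      | succ d ih =>
        intro hd
        have h1 : g (Nat.find hex + d) = -1 := ih (by omega)
        have h2 : g (Nat.find hex + d + 1) ≤ g (Nat.find hex + d) := hmono _ (by omega)
        rcases hg (Nat.find hex + d + 1) with h | h
        · rw [h, h1] at h2; omega
        · simpa [← Nat.add_assoc] using h
    intro j hj
    constructor
    · intro hjt
      rcases hg j with h | h
      · exact h
      · exact absurd h (Nat.find_min hex hjt)
    · intro hjt
      have := hafter (j - Nat.find hex) (by omega)
      rwa [Nat.add_sub_cancel' hjt] at this
  · rintro ⟨t, ht1, htn, hdw⟩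
    have hpt2 : ∀ j ∈ Finset.range n, (g j - g (j + 1)) ^ 2 = 2 * (g j - g (j + 1)) := by
      intro j hj
      rw [Finset.mem_range] at hj
      rw [spin_step_sq_eq (hg j) (hg (j + 1))]
      by_cases h : j + 1 < t
      · rw [(hdw j (by omega)).1 (by omega), (hdw (j + 1) (by omega)).1 h]
      · by_cases h2 : j < t
        · rw [(hdw j (by omega)).1 h2, (hdw (j + 1) (by omega)).2 (by omega)]; norm_num
        · rw [(hdw j (by omega)).2 (by omega), (hdw (j + 1) (by omega)).2 (by omega)]
    rw [Finset.sum_congr rfl hpt2, htel]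

lemma rowA_props (n : ℕ) (hn : 1 ≤ n) (A : ℕ → ℕ → ℤ) (i : ℕ)
    (hAi : ∀ j < n - 1, A i j = -1 ∨ A i j = 1) :
    4 ≤ ∑ j ∈ Finset.range n, (dA n A i j) ^ 2 ∧
    ((∑ j ∈ Finset.range n, (dA n A i j) ^ 2) = 4 ↔
      ∃ t ≤ n - 1, ∀ j < n - 1, (j < t → A i j = 1) ∧ (t ≤ j → A i j = -1)) := by
  have hg : ∀ j, gA n A i j = 1 ∨ gA n A i j = -1 := by
    intro j
    unfold gA
    split
    · left; rfl
    · split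
      · rename_i h1 h2
        rcases hAi (j - 1) (by omega) with h | h
        · right; exact h
        · left; exact h
      · right; rfl
  have h0 : gA n A i 0 = 1 := by simp [gA]
  have hN : gA n A i n = -1 := by
    unfold gA
    rw [if_neg (by omega), if_neg (by omega)]
  have hgAj : ∀ j, j < n - 1 → gA n A i (j + 1) = A i j := by
    intro j hj
    unfold gA
    rw [if_neg (by omega), if_pos (by omega)]
    norm_num
  obtain ⟨hge, hiff⟩ := seq_bound n hn (gA n A i) hg h0 hN
  have hsum : (∑ j ∈ Finset.range n, (dA n A i j) ^ 2) =
      ∑ j ∈ Finset.range n, (gA n A i j - gA n A i (j + 1)) ^ 2 := rfl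
  rw [hsum]
  refine ⟨hge, hiff.trans ?_⟩
  constructor
  · rintro ⟨t, ht1, htn, hdw⟩
    refine ⟨t - 1, by omega, fun j hj => ⟨?_, ?_⟩⟩
    · intro hjt
      have := (hdw (j + 1) (by omega)).1 (by omega)
      rwa [hgAj j hj] at this
    · intro hjt
      have := (hdw (j + 1) (by omega)).2 (by omega)
      rwa [hgAj j hj] at this
  · rintro ⟨t, htn, hdw⟩
    refine ⟨t + 1, by omega, by omega, fun j hj => ⟨?_, ?_⟩⟩
    · intro hjt
      rcases Nat.eq_zero_or_pos j with h | h
      · rw [h, h0]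
      · have hj1 : j - 1 < n - 1 := by omega
        have := (hdw (j - 1) hj1).1 (by omega)
        rwa [← hgAj (j - 1) hj1, show j - 1 + 1 = j by omega] at this
    · intro hjt
      rcases eq_or_lt_of_le hj with h | h
      · rw [h, hN]
      · have hj1 : j - 1 < n - 1 := by omega
        have := (hdw (j - 1) hj1).2 (by omega)
        rwa [← hgAj (j - 1) hj1, show j - 1 + 1 = j by omega] at this

lemma colB_props (n : ℕ) (hn : 1 ≤ n) (B : ℕ → ℕ → ℤ) (j : ℕ)
    (hBj : ∀ i < n - 1, B i j = -1 ∨ B i j = 1) :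
    4 ≤ ∑ i ∈ Finset.range n, (dB n B i j) ^ 2 ∧
    ((∑ i ∈ Finset.range n, (dB n B i j) ^ 2) = 4 ↔
      ∃ t ≤ n - 1, ∀ i < n - 1, (i < t → B i j = 1) ∧ (t ≤ i → B i j = -1)) := by
  have hg : ∀ i, gB n B i j = 1 ∨ gB n B i j = -1 := by
    intro i
    unfold gB
    split
    · left; rfl
    · split
      · rename_i h1 h2
        rcases hBj (i - 1) (by omega) with h | h
        · right; exact h
        · left; exact h
      · right; rfl
  have h0 : gB n B 0 j = 1 := by simp [gB]
  have hN : gB n B n j = -1 := by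
    unfold gB
    rw [if_neg (by omega), if_neg (by omega)]
  have hgBi : ∀ i, i < n - 1 → gB n B (i + 1) j = B i j := by
    intro i hi
    unfold gB
    rw [if_neg (by omega), if_pos (by omega)]
    norm_num
  obtain ⟨hge, hiff⟩ := seq_bound n hn (fun i => gB n B i j) hg h0 hN
  have hsum : (∑ i ∈ Finset.range n, (dB n B i j) ^ 2) =
      ∑ i ∈ Finset.range n, (gB n B i j - gB n B (i + 1) j) ^ 2 := rfl
  rw [hsum]
  refine ⟨hge, hiff.trans ?_⟩
  constructor
  · rintro ⟨t, ht1, htn, hdw⟩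
    refine ⟨t - 1, by omega, fun i hi => ⟨?_, ?_⟩⟩
    · intro hit
      have := (hdw (i + 1) (by omega)).1 (by omega)
      rwa [hgBi i hi] at this
    · intro hit
      have := (hdw (i + 1) (by omega)).2 (by omega)
      rwa [hgBi i hi] at this
  · rintro ⟨t, htn, hdw⟩
    refine ⟨t + 1, by omega, by omega, fun i hi => ⟨?_, ?_⟩⟩
    · intro hit
      rcases Nat.eq_zero_or_pos i with h | h
      · simpa [h] using h0
      · have hi1 : i - 1 < n - 1 := by omega
        have := (hdw (i - 1) hi1).1 (by omega)
        have h2 := hgBi (i - 1) hi1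
        rw [show i - 1 + 1 = i by omega] at h2
        simpa [h2] using this
    · intro hit
      rcases eq_or_lt_of_le hi with h | h
      · simpa [h] using hN
      · have hi1 : i - 1 < n - 1 := by omega
        have := (hdw (i - 1) hi1).2 (by omega)
        have h2 := hgBi (i - 1) hi1
        rw [show i - 1 + 1 = i by omega] at h2
        simpa [h2] using this

lemma sum_ge_const (n : ℕ) (f : ℕ → ℤ) (h : ∀ i ∈ Finset.range n, 4 ≤ f i) :
    4 * (n : ℤ) ≤ ∑ i ∈ Finset.range n, f i ∧
    ((∑ i ∈ Finset.range n, f i) = 4 * n ↔ ∀ i < n, f i = 4) := by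
  have hconst : (4 * (n : ℤ)) = ∑ _i ∈ Finset.range n, (4 : ℤ) := by simp [mul_comm]
  constructor
  · rw [hconst]; exact Finset.sum_le_sum h
  · rw [hconst, eq_comm, Finset.sum_eq_sum_iff_of_le h]
    constructor
    · intro h' i hi; exact ((h' i (Finset.mem_range.mpr hi))).symm
    · intro h' i hi; exact (h' i (Finset.mem_range.mp hi)).symm

/-- For an `n × (n-1)` spin matrix `A` and an `(n-1) × n` spin matrix `B` (with guard
qubits), the Hamiltonian `H_dⁿⁿ(A,B)` is at least `4n`, and equals `4n` iff every
guard-extended row of `A` is a spin domain-wall vector, every guard-extended column of `B`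
is a spin domain-wall vector, and `Δa_{i,j} = Δb_{i,j}` for all `i, j`. -/
theorem dual_matrix_domain_wall_hamiltonian (n : ℕ) (hn : 1 ≤ n) (A B : ℕ → ℕ → ℤ)
    (hA : ∀ i < n, ∀ j < n - 1, A i j = -1 ∨ A i j = 1)
    (hB : ∀ i < n - 1, ∀ j < n, B i j = -1 ∨ B i j = 1) :
    (4 * n : ℚ) ≤ Hd n n A B ∧
    (Hd n n A B = 4 * n ↔
      RowDW n n A ∧ ColDW n n B ∧ ∀ i < n, ∀ j < n, dA n A i j = dB n B i j) := by
  have hrow := fun i (hi : i < n) => rowA_props n hn A i (hA i hi)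
  have hcol := fun j (hj : j < n) => colB_props n hn B j (fun i hi => hB i hi j hj)
  obtain ⟨hSAge, hSAeq⟩ := sum_ge_const n (fun i => ∑ j ∈ Finset.range n, (dA n A i j) ^ 2)
    (fun i hi => (hrow i (Finset.mem_range.mp hi)).1)
  obtain ⟨hSBge, hSBeq⟩ := sum_ge_const n (fun j => ∑ i ∈ Finset.range n, (dB n B i j) ^ 2)
    (fun j hj => (hcol j (Finset.mem_range.mp hj)).1)
  have hSDge : (0:ℤ) ≤ ∑ i ∈ Finset.range n, ∑ j ∈ Finset.range n,
      (dA n A i j - dB n B i j) ^ 2 :=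
    Finset.sum_nonneg fun i _ => Finset.sum_nonneg fun j _ => sq_nonneg _
  have hHd : Hd n n A B =
      (((∑ i ∈ Finset.range n, ∑ j ∈ Finset.range n, (dA n A i j) ^ 2) +
        (∑ j ∈ Finset.range n, ∑ i ∈ Finset.range n, (dB n B i j) ^ 2) +
        (∑ i ∈ Finset.range n, ∑ j ∈ Finset.range n,
          (dA n A i j - dB n B i j) ^ 2) : ℤ) : ℚ) / 2 := by
    rw [Finset.sum_comm (f := fun j i => (dB n B i j) ^ 2)]
    unfold Hd
    push_cast
    ring
  constructor
  · rw [hHd, le_div_iff₀ (by norm_num : (0:ℚ) < 2)]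
    have h8 : (8 * (n : ℤ)) ≤
        (∑ i ∈ Finset.range n, ∑ j ∈ Finset.range n, (dA n A i j) ^ 2) +
        (∑ j ∈ Finset.range n, ∑ i ∈ Finset.range n, (dB n B i j) ^ 2) +
        (∑ i ∈ Finset.range n, ∑ j ∈ Finset.range n,
          (dA n A i j - dB n B i j) ^ 2) := by linarith [hSAge, hSBge, hSDge]
    calc (4 * (n:ℚ)) * 2 = ((8 * (n:ℤ) : ℤ) : ℚ) := by push_cast; ring
    _ ≤ _ := by exact_mod_cast h8
  · have hRow : (∑ i ∈ Finset.range n, ∑ j ∈ Finset.range n, (dA n A i j) ^ 2)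
        = 4 * (n:ℤ) ↔ RowDW n n A := by
      rw [hSAeq]
      constructor
      · intro h i hi; exact (hrow i hi).2.mp (h i hi)
      · intro h i hi; exact (hrow i hi).2.mpr (h i hi)
    have hCol : (∑ j ∈ Finset.range n, ∑ i ∈ Finset.range n, (dB n B i j) ^ 2)
        = 4 * (n:ℤ) ↔ ColDW n n B := by
      rw [hSBeq]
      constructor
      · intro h j hj; exact (hcol j hj).2.mp (h j hj)
      · intro h j hj; exact (hcol j hj).2.mpr (h j hj)
    have hSDeq : (∑ i ∈ Finset.range n, ∑ j ∈ Finset.range n,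
        (dA n A i j - dB n B i j) ^ 2) = 0 ↔
        ∀ i < n, ∀ j < n, dA n A i j = dB n B i j := by
      rw [Finset.sum_eq_zero_iff_of_nonneg
        (fun i _ => Finset.sum_nonneg fun j _ => sq_nonneg _)]
      constructor
      · intro h i hi j hj
        have h1 := h i (Finset.mem_range.mpr hi)
        rw [Finset.sum_eq_zero_iff_of_nonneg (fun j _ => sq_nonneg _)] at h1
        have h2 := sq_eq_zero_iff.mp (h1 j (Finset.mem_range.mpr hj))
        linarith
      · intro h i hi
        apply Finset.sum_eq_zero
        intro j hj
        rw [h i (Finset.mem_range.mp hi) j (Finset.mem_range.mp hj)]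
        ring
    have hcast : Hd n n A B = 4 * (n:ℚ) ↔
        (∑ i ∈ Finset.range n, ∑ j ∈ Finset.range n, (dA n A i j) ^ 2) +
        (∑ j ∈ Finset.range n, ∑ i ∈ Finset.range n, (dB n B i j) ^ 2) +
        (∑ i ∈ Finset.range n, ∑ j ∈ Finset.range n,
          (dA n A i j - dB n B i j) ^ 2) = 8 * (n : ℤ) := by
      rw [hHd, div_eq_iff (by norm_num : (2:ℚ) ≠ 0),
        show (4 * (n:ℚ)) * 2 = ((8 * (n:ℤ) : ℤ) : ℚ) by push_cast; ring, Int.cast_inj]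
    rw [hcast, ← hRow, ← hCol, ← hSDeq]
    constructor
    · intro h
      refine ⟨by linarith, by linarith, by linarith⟩
    · rintro ⟨h1, h2, h3⟩
      linarith
end

section
/- (Theorem 2) Let 1 ≤ m ≤ n. Let A be an m×(n−1) spin matrix with guard qubits a_{i,−1} = +1 and a_{i,n−1} = −1, and let B be an (m−1)×n spin matrix with guard qubits b_{−1,j} = +1 and b_{m−1,j} = −1. Define Δa_{i,j} = a_{i,j−1} − a_{i,j} and Δb_{i,j} = b_{i−1,j} − b_{i,j} for 0 ≤ i ≤ m−1 and 0 ≤ j ≤ n−1, and set H_d^{mn}(A,B) = (1/2)·Σ_{i,j} (Δa_{i,j})^2 + (1/2)·Σ_{i,j} (Δb_{i,j})^2 + (1/2)·Σ_{i,j} (Δa_{i,j} − Δb_{i,j})^2. Then H_d^{mn}(A,B) ≥ 4n, and H_d^{mn}(A,B) = 4n if and only if A and B satisfy the row domain-wall condition, the column domain-wall condition, and the dual-permutation condition. -/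
/-- Dual-permutation condition (spin version): for all `i < m` and `j < n`, if
`Δa_{i,j} = 2` then `Δb_{i,j} = 2`. -/
def DualPerm (m n : ℕ) (A B : ℕ → ℕ → ℤ) : Prop :=
  ∀ i < m, ∀ j < n, dA n A i j = 2 → dB m B i j = 2

/-- If the guard-extended vector `f` is a step (domain-wall) vector with wall at `t`,
then its difference vector is `2` at `t` and `0` elsewhere. -/
private lemma step_diff (f : ℕ → ℤ) (k t : ℕ) (hf : ∀ j ≤ k, f j = if j ≤ t then 1 else -1) :
    ∀ j < k, f j - f (j + 1) = if j = t then 2 else 0 := by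
  intro j hj
  rw [hf j (by omega), hf (j + 1) (by omega)]
  split_ifs <;> omega

/-- Conversely, if all guard-extended differences lie in `{0, 2}` then the vector is a
step vector. -/
private lemma diff_step (f : ℕ → ℤ) (k : ℕ) (h0 : f 0 = 1) (hk : f k = -1)
    (hspin : ∀ j, 0 < j → j < k → f j = 1 ∨ f j = -1)
    (hd : ∀ j < k, f j - f (j + 1) = 0 ∨ f j - f (j + 1) = 2) :
    ∃ t < k, ∀ j ≤ k, f j = if j ≤ t then 1 else -1 := by
  have hne : f k ≠ 1 := by rw [hk]; norm_num
  have hex : ∃ j, f j ≠ 1 := ⟨k, hne⟩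
  set t0 := Nat.find hex with ht0
  have hspec : f t0 ≠ 1 := Nat.find_spec hex
  have hmin : ∀ j < t0, f j = 1 := fun j hj => not_not.mp (Nat.find_min hex hj)
  have ht0pos : 0 < t0 := by
    rcases Nat.eq_zero_or_pos t0 with h | h
    · exact absurd (h ▸ hspec) (by rw [h0]; simp)
    · exact h
  have ht0le : t0 ≤ k := by
    by_contra h
    exact hne (hmin k (by omega))
  have hup : ∀ j, t0 ≤ j → j ≤ k → f j ≠ 1 := by
    intro j
    induction j with
    | zero => intro h _; exact absurd h (by omega)
    | succ j ih =>
      intro hj hjk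
      rcases Nat.lt_or_ge j t0 with h | h
      · have hjt : t0 = j + 1 := by omega
        rw [← hjt]; exact hspec
      · have hj1 : f j ≠ 1 := ih h (by omega)
        have hjlt : j < k := by omega
        have hfj : f j = -1 := by
          rcases hspin j (by omega) hjlt with h1 | h1
          · exact absurd h1 hj1
          · exact h1
        intro heq
        rcases hd j hjlt with h2 | h2 <;> omega
  refine ⟨t0 - 1, by omega, fun j hjk => ?_⟩
  split_ifs with h
  · exact hmin j (by omega)
  · have hne1 : f j ≠ 1 := hup j (by omega) hjk
    rcases eq_or_lt_of_le hjk with h3 | h3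
    · rw [h3]; exact hk
    · rcases hspin j (by omega) h3 with h1 | h1
      · exact absurd h1 hne1
      · exact h1

private lemma sum_decomp (m n : ℕ) (x y : ℕ → ℕ → ℤ) :
    ∑ i ∈ Finset.range m, ∑ j ∈ Finset.range n, (x i j ^ 2 - x i j * y i j + y i j ^ 2)
    = (∑ i ∈ Finset.range m, ∑ j ∈ Finset.range n, x i j * (x i j - y i j))
      + (∑ i ∈ Finset.range m, ∑ j ∈ Finset.range n, (y i j ^ 2 - 2 * y i j))
      + 2 * ∑ i ∈ Finset.range m, ∑ j ∈ Finset.range n, y i j := by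
  rw [Finset.mul_sum, ← Finset.sum_add_distrib, ← Finset.sum_add_distrib]
  refine Finset.sum_congr rfl fun i _ => ?_
  rw [Finset.mul_sum, ← Finset.sum_add_distrib, ← Finset.sum_add_distrib]
  refine Finset.sum_congr rfl fun j _ => ?_
  ring

private lemma pt_nonneg1 (x y : ℤ) (hx : x = -2 ∨ x = 0 ∨ x = 2)
    (hy : y = -2 ∨ y = 0 ∨ y = 2) : 0 ≤ x * (x - y) := by
  rcases hx with rfl | rfl | rfl <;> rcases hy with rfl | rfl | rfl <;> norm_num

private lemma pt_nonneg2 (y : ℤ) (hy : y = -2 ∨ y = 0 ∨ y = 2) : 0 ≤ y ^ 2 - 2 * y := by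
  rcases hy with rfl | rfl | rfl <;> norm_num

/-- Theorem 2: `H_dᵐⁿ(A,B) ≥ 4n`, with equality iff `A` and `B` satisfy the row
domain-wall, column domain-wall, and dual-permutation conditions. -/
theorem Hd_min_iff_conditions (m n : ℕ) (hm : 1 ≤ m) (hmn : m ≤ n)
    (A B : ℕ → ℕ → ℤ)
    (hA : ∀ i < m, ∀ j < n - 1, A i j = -1 ∨ A i j = 1)
    (hB : ∀ i < m - 1, ∀ j < n, B i j = -1 ∨ B i j = 1) :
    (4 * n : ℚ) ≤ Hd m n A B ∧
    (Hd m n A B = 4 * n ↔ RowDW m n A ∧ ColDW m n B ∧ DualPerm m n A B) := by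
  have hn : 1 ≤ n := le_trans hm hmn
  -- values of the guard-extended entries
  have hgA : ∀ i < m, ∀ j ≤ n, gA n A i j = 1 ∨ gA n A i j = -1 := by
    intro i hi j hj
    unfold gA
    split_ifs with h1 h2
    · exact Or.inl rfl
    · exact (hA i hi (j - 1) (by omega)).elim Or.inr Or.inl
    · exact Or.inr rfl
  have hgB : ∀ j < n, ∀ i ≤ m, gB m B i j = 1 ∨ gB m B i j = -1 := by
    intro j hj i hi
    unfold gB
    split_ifs with h1 h2
    · exact Or.inl rfl
    · exact (hB (i - 1) (by omega) j hj).elim Or.inr Or.inl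
    · exact Or.inr rfl
  have hgA0 : ∀ i, gA n A i 0 = 1 := by intro i; unfold gA; simp
  have hgAn : ∀ i, gA n A i n = -1 := by
    intro i; unfold gA; rw [if_neg (by omega), if_neg (by omega)]
  have hgB0 : ∀ j, gB m B 0 j = 1 := by intro j; unfold gB; simp
  have hgBm : ∀ j, gB m B m j = -1 := by
    intro j; unfold gB; rw [if_neg (by omega), if_neg (by omega)]
  have hdA : ∀ i < m, ∀ j < n, dA n A i j = -2 ∨ dA n A i j = 0 ∨ dA n A i j = 2 := by
    intro i hi j hj
    have h1 := hgA i hi j (by omega)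
    have h2 := hgA i hi (j + 1) (by omega)
    unfold dA
    rcases h1 with h | h <;> rcases h2 with h' | h' <;> rw [h, h'] <;> norm_num
  have hdB : ∀ i < m, ∀ j < n, dB m B i j = -2 ∨ dB m B i j = 0 ∨ dB m B i j = 2 := by
    intro i hi j hj
    have h1 := hgB j hj i (by omega)
    have h2 := hgB j hj (i + 1) (by omega)
    unfold dB
    rcases h1 with h | h <;> rcases h2 with h' | h' <;> rw [h, h'] <;> norm_num
  -- telescoping sums
  have hsumB : ∀ j < n, ∑ i ∈ Finset.range m, dB m B i j = 2 := by
    intro j hj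
    have := Finset.sum_range_sub' (fun i => gB m B i j) m
    simp only [hgB0 j, hgBm j] at this
    unfold dB
    rw [this]; norm_num
  -- the double sum of dB
  have hyS : ∑ i ∈ Finset.range m, ∑ j ∈ Finset.range n, dB m B i j = 2 * n := by
    rw [Finset.sum_comm]
    rw [Finset.sum_congr rfl fun j hj => hsumB j (Finset.mem_range.mp hj)]
    simp [mul_comm]
  -- rewrite Hd as an integer sum
  have hHd : Hd m n A B =
      ((∑ i ∈ Finset.range m, ∑ j ∈ Finset.range n,
        (dA n A i j ^ 2 - dA n A i j * dB m B i j + dB m B i j ^ 2) : ℤ) : ℚ) := by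
    unfold Hd
    push_cast
    rw [Finset.mul_sum, Finset.mul_sum, Finset.mul_sum, ← Finset.sum_add_distrib,
      ← Finset.sum_add_distrib]
    refine Finset.sum_congr rfl fun i _ => ?_
    rw [Finset.mul_sum, Finset.mul_sum, Finset.mul_sum, ← Finset.sum_add_distrib,
      ← Finset.sum_add_distrib]
    refine Finset.sum_congr rfl fun j _ => ?_
    ring
  have hdecomp :
      (∑ i ∈ Finset.range m, ∑ j ∈ Finset.range n,
        (dA n A i j ^ 2 - dA n A i j * dB m B i j + dB m B i j ^ 2))
      = (∑ i ∈ Finset.range m, ∑ j ∈ Finset.range n,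
          dA n A i j * (dA n A i j - dB m B i j))
        + (∑ i ∈ Finset.range m, ∑ j ∈ Finset.range n,
          (dB m B i j ^ 2 - 2 * dB m B i j)) + 4 * n := by
    rw [sum_decomp, hyS]; ring
  -- nonnegativity of the two correction sums
  have hP0 : ∀ i ∈ Finset.range m, ∀ j ∈ Finset.range n,
      0 ≤ dA n A i j * (dA n A i j - dB m B i j) := by
    intro i hi j hj
    exact pt_nonneg1 _ _ (hdA i (Finset.mem_range.mp hi) j (Finset.mem_range.mp hj))
      (hdB i (Finset.mem_range.mp hi) j (Finset.mem_range.mp hj))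
  have hQ0 : ∀ i ∈ Finset.range m, ∀ j ∈ Finset.range n,
      0 ≤ dB m B i j ^ 2 - 2 * dB m B i j := by
    intro i hi j hj
    exact pt_nonneg2 _ (hdB i (Finset.mem_range.mp hi) j (Finset.mem_range.mp hj))
  have hPnn : 0 ≤ ∑ i ∈ Finset.range m, ∑ j ∈ Finset.range n,
      dA n A i j * (dA n A i j - dB m B i j) :=
    Finset.sum_nonneg fun i hi => Finset.sum_nonneg fun j hj => hP0 i hi j hj
  have hQnn : 0 ≤ ∑ i ∈ Finset.range m, ∑ j ∈ Finset.range n,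
      (dB m B i j ^ 2 - 2 * dB m B i j) :=
    Finset.sum_nonneg fun i hi => Finset.sum_nonneg fun j hj => hQ0 i hi j hj
  -- the bridge between the RowDW/ColDW conditions and diff conditions
  have hrowA : RowDW m n A ↔
      ∀ i < m, ∀ j < n, dA n A i j = 0 ∨ dA n A i j = 2 := by
    constructor
    · intro hR i hi j hj
      obtain ⟨t, ht, hpat⟩ := hR i hi
      have hstep : ∀ j' ≤ n, gA n A i j' = if j' ≤ t then 1 else -1 := by
        intro j' hj'
        unfold gA
        split_ifs with h1 h2 h3 h4
        · rfl
        · omega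
        · exact (hpat (j' - 1) (by omega)).1 (by omega)
        · exact (hpat (j' - 1) (by omega)).2 (by omega)
        · omega
        · rfl
      have := step_diff (gA n A i) n t hstep j hj
      unfold dA
      rw [this]
      split_ifs <;> simp
    · intro h i hi
      obtain ⟨t, ht, hstep⟩ := diff_step (gA n A i) n (hgA0 i) (hgAn i)
        (fun j h1 h2 => hgA i hi j (by omega))
        (fun j hj => by have := h i hi j hj; unfold dA at this; exact this)
      refine ⟨t, by omega, fun j hj => ⟨fun hjt => ?_, fun hjt => ?_⟩⟩
      · have := hstep (j + 1) (by omega)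
        rw [if_pos (by omega)] at this
        unfold gA at this
        rw [if_neg (by omega), if_pos (by omega)] at this
        simpa using this
      · have := hstep (j + 1) (by omega)
        rw [if_neg (by omega)] at this
        unfold gA at this
        rw [if_neg (by omega), if_pos (by omega)] at this
        simpa using this
  have hcolB : ColDW m n B ↔
      ∀ j < n, ∀ i < m, dB m B i j = 0 ∨ dB m B i j = 2 := by
    constructor
    · intro hC j hj i hi
      obtain ⟨t, ht, hpat⟩ := hC j hj
      have hstep : ∀ i' ≤ m, gB m B i' j = if i' ≤ t then 1 else -1 := by
        intro i' hi'
        unfold gB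
        split_ifs with h1 h2 h3 h4
        · rfl
        · omega
        · exact (hpat (i' - 1) (by omega)).1 (by omega)
        · exact (hpat (i' - 1) (by omega)).2 (by omega)
        · omega
        · rfl
      have := step_diff (fun i' => gB m B i' j) m t hstep i hi
      unfold dB
      rw [this]
      split_ifs <;> simp
    · intro h j hj
      obtain ⟨t, ht, hstep⟩ := diff_step (fun i' => gB m B i' j) m (hgB0 j) (hgBm j)
        (fun i h1 h2 => hgB j hj i (by omega))
        (fun i hi => by have := h j hj i hi; unfold dB at this; exact this)
      refine ⟨t, by omega, fun i hi => ⟨fun hit => ?_, fun hit => ?_⟩⟩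
      · have := hstep (i + 1) (by omega)
        rw [if_pos (by omega)] at this
        unfold gB at this
        rw [if_neg (by omega), if_pos (by omega)] at this
        simpa using this
      · have := hstep (i + 1) (by omega)
        rw [if_neg (by omega)] at this
        unfold gB at this
        rw [if_neg (by omega), if_pos (by omega)] at this
        simpa using this
  -- equality of the two correction sums with zero, pointwise
  have hPzero : (∑ i ∈ Finset.range m, ∑ j ∈ Finset.range n,
      dA n A i j * (dA n A i j - dB m B i j)) = 0 ↔
      ∀ i < m, ∀ j < n, dA n A i j * (dA n A i j - dB m B i j) = 0 := by
    rw [Finset.sum_eq_zero_iff_of_nonneg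
      (fun i hi => Finset.sum_nonneg fun j hj => hP0 i hi j hj)]
    constructor
    · intro h i hi j hj
      have := (Finset.sum_eq_zero_iff_of_nonneg (hP0 i (Finset.mem_range.mpr hi))).mp
        (h i (Finset.mem_range.mpr hi))
      exact this j (Finset.mem_range.mpr hj)
    · intro h i hi
      exact Finset.sum_eq_zero fun j hj =>
        h i (Finset.mem_range.mp hi) j (Finset.mem_range.mp hj)
  have hQzero : (∑ i ∈ Finset.range m, ∑ j ∈ Finset.range n,
      (dB m B i j ^ 2 - 2 * dB m B i j)) = 0 ↔
      ∀ i < m, ∀ j < n, dB m B i j ^ 2 - 2 * dB m B i j = 0 := by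
    rw [Finset.sum_eq_zero_iff_of_nonneg
      (fun i hi => Finset.sum_nonneg fun j hj => hQ0 i hi j hj)]
    constructor
    · intro h i hi j hj
      have := (Finset.sum_eq_zero_iff_of_nonneg (hQ0 i (Finset.mem_range.mpr hi))).mp
        (h i (Finset.mem_range.mpr hi))
      exact this j (Finset.mem_range.mpr hj)
    · intro h i hi
      exact Finset.sum_eq_zero fun j hj =>
        h i (Finset.mem_range.mp hi) j (Finset.mem_range.mp hj)
  constructor
  · -- the lower bound
    rw [hHd, hdecomp]
    push_cast
    have : (0 : ℤ) ≤ (∑ i ∈ Finset.range m, ∑ j ∈ Finset.range n,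
        dA n A i j * (dA n A i j - dB m B i j))
      + (∑ i ∈ Finset.range m, ∑ j ∈ Finset.range n,
        (dB m B i j ^ 2 - 2 * dB m B i j)) := by omega
    have h2 : (0 : ℚ) ≤ ((∑ i ∈ Finset.range m, ∑ j ∈ Finset.range n,
        dA n A i j * (dA n A i j - dB m B i j))
      + (∑ i ∈ Finset.range m, ∑ j ∈ Finset.range n,
        (dB m B i j ^ 2 - 2 * dB m B i j)) : ℤ) := by exact_mod_cast this
    push_cast at h2
    linarith
  · rw [hHd]
    have hcast : ((∑ i ∈ Finset.range m, ∑ j ∈ Finset.range n,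
        (dA n A i j ^ 2 - dA n A i j * dB m B i j + dB m B i j ^ 2) : ℤ) : ℚ) = 4 * n ↔
        (∑ i ∈ Finset.range m, ∑ j ∈ Finset.range n,
        (dA n A i j ^ 2 - dA n A i j * dB m B i j + dB m B i j ^ 2)) = 4 * n := by
      exact_mod_cast Iff.rfl
    rw [hcast, hdecomp]
    constructor
    · intro heq
      have hPz : (∑ i ∈ Finset.range m, ∑ j ∈ Finset.range n,
          dA n A i j * (dA n A i j - dB m B i j)) = 0 := by omega
      have hQz : (∑ i ∈ Finset.range m, ∑ j ∈ Finset.range n,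
          (dB m B i j ^ 2 - 2 * dB m B i j)) = 0 := by omega
      have hPpt := hPzero.mp hPz
      have hQpt := hQzero.mp hQz
      have hBv : ∀ i < m, ∀ j < n, dB m B i j = 0 ∨ dB m B i j = 2 := by
        intro i hi j hj
        have := hQpt i hi j hj
        have h := hdB i hi j hj
        rcases h with h | h | h <;> rw [h] at this ⊢ <;> omega
      have hAv : ∀ i < m, ∀ j < n, dA n A i j = 0 ∨ dA n A i j = 2 := by
        intro i hi j hj
        have hp := hPpt i hi j hj
        have hb := hBv i hi j hj
        have ha := hdA i hi j hj
        rcases ha with h | h | h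
        · exfalso
          rcases hb with h' | h' <;> rw [h, h'] at hp <;> norm_num at hp
        · exact Or.inl h
        · exact Or.inr h
      refine ⟨hrowA.mpr hAv, hcolB.mpr (fun j hj i hi => hBv i hi j hj), ?_⟩
      intro i hi j hj ha2
      have hp := hPpt i hi j hj
      rw [ha2] at hp
      omega
    · rintro ⟨hR, hC, hD⟩
      have hAv := hrowA.mp hR
      have hBv := hcolB.mp hC
      have hPz : (∑ i ∈ Finset.range m, ∑ j ∈ Finset.range n,
          dA n A i j * (dA n A i j - dB m B i j)) = 0 := by
        rw [hPzero]
        intro i hi j hj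
        rcases hAv i hi j hj with h | h
        · rw [h]; ring
        · rw [h, hD i hi j hj h]; ring
      have hQz : (∑ i ∈ Finset.range m, ∑ j ∈ Finset.range n,
          (dB m B i j ^ 2 - 2 * dB m B i j)) = 0 := by
        rw [hQzero]
        intro i hi j hj
        rcases hBv j hj i hi with h | h <;> rw [h] <;> ring
      omega
end

section
/- Let n ≥ 1. Let A be an n×(n−1) spin matrix with guard qubits a_{i,−1} = +1 and a_{i,n−1} = −1, let B be an (n−1)×n spin matrix with guard qubits b_{−1,j} = +1 and b_{n−1,j} = −1, and let S = (s_{i,j}) be an n×n spin matrix. Define Δa_{i,j} = a_{i,j−1} − a_{i,j} and Δb_{i,j} = b_{i−1,j} − b_{i,j} for 0 ≤ i, j ≤ n−1. Then the Hamiltonian H_e^{nn}(A,B,S) = (1/2)·Σ_{i,j} (Δa_{i,j})^2 + (1/2)·Σ_{i,j} (Δb_{i,j})^2 + (1/2)·Σ_{i,j} ((s_{i,j}+1) − Δa_{i,j})^2 + (1/2)·Σ_{i,j} ((s_{i,j}+1) − Δb_{i,j})^2 satisfies H_e^{nn}(A,B,S) ≥ 4n, and H_e^{nn}(A,B,S)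 = 4n if and only if every guard-extended row of A is a spin domain-wall vector, every guard-extended column of B is a spin domain-wall vector, Δa_{i,j} = Δb_{i,j} for all i, j, and s_{i,j} + 1 = Δa_{i,j} for all i, j. -/
/-- The extended dual-matrix domain-wall Ising Hamiltonian
`H_eⁿⁿ(A,B,S) = ½ ΣΣ (Δa)² + ½ ΣΣ (Δb)² + ½ ΣΣ ((s+1) - Δa)² + ½ ΣΣ ((s+1) - Δb)²`
over `0 ≤ i, j ≤ n-1`. -/
def He (n : ℕ) (A B S : ℕ → ℕ → ℤ) : ℚ :=
  (1 / 2 : ℚ) * ∑ i ∈ Finset.range n, ∑ j ∈ Finset.range n, (dA n A i j : ℚ) ^ 2 +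
  (1 / 2 : ℚ) * ∑ i ∈ Finset.range n, ∑ j ∈ Finset.range n, (dB n B i j : ℚ) ^ 2 +
  (1 / 2 : ℚ) * ∑ i ∈ Finset.range n, ∑ j ∈ Finset.range n,
    (((S i j : ℚ) + 1) - (dA n A i j : ℚ)) ^ 2 +
  (1 / 2 : ℚ) * ∑ i ∈ Finset.range n, ∑ j ∈ Finset.range n,
    (((S i j : ℚ) + 1) - (dB n B i j : ℚ)) ^ 2

lemma spin_sq (a b : ℤ) (ha : a = 1 ∨ a = -1) (hb : b = 1 ∨ b = -1) :
    (a - b) ^ 2 = 2 * |a - b| := by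
  rcases ha with rfl | rfl <;> rcases hb with rfl | rfl <;> decide

lemma gA_spin (n : ℕ) (A : ℕ → ℕ → ℤ) (i : ℕ)
    (hA : ∀ j < n - 1, A i j = -1 ∨ A i j = 1) (j : ℕ) :
    gA n A i j = 1 ∨ gA n A i j = -1 := by
  unfold gA
  split_ifs with h1 h2
  · exact Or.inl rfl
  · exact (hA (j - 1) (by omega)).symm
  · exact Or.inr rfl

lemma gB_spin (n : ℕ) (B : ℕ → ℕ → ℤ) (j : ℕ)
    (hB : ∀ i < n - 1, B i j = -1 ∨ B i j = 1) (i : ℕ) :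
    gB n B i j = 1 ∨ gB n B i j = -1 := by
  unfold gB
  split_ifs with h1 h2
  · exact Or.inl rfl
  · exact (hB (i - 1) (by omega)).symm
  · exact Or.inr rfl

lemma row_bound (n : ℕ) (hn : 1 ≤ n) (A : ℕ → ℕ → ℤ) (i : ℕ)
    (hA : ∀ j < n - 1, A i j = -1 ∨ A i j = 1) :
    4 ≤ ∑ j ∈ Finset.range n, (dA n A i j) ^ 2 ∧
    (∑ j ∈ Finset.range n, (dA n A i j) ^ 2 = 4 ↔ ∀ j < n, 0 ≤ dA n A i j) := by
  have hg := gA_spin n A i hA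
  have hsq : ∀ j, (dA n A i j) ^ 2 = 2 * |dA n A i j| := fun j =>
    spin_sq _ _ (hg j) (hg (j + 1))
  have htel : ∑ j ∈ Finset.range n, dA n A i j = 2 := by
    unfold dA
    rw [Finset.sum_range_sub']
    have h0 : gA n A i 0 = 1 := by unfold gA; simp
    have hn' : gA n A i n = -1 := by
      unfold gA; rw [if_neg (by omega), if_neg (by omega)]
    rw [h0, hn']; ring
  have key : ∑ j ∈ Finset.range n, (dA n A i j) ^ 2
      = 4 + 2 * ∑ j ∈ Finset.range n, (|dA n A i j| - dA n A i j) := by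
    simp_rw [hsq]
    rw [Finset.sum_sub_distrib, htel, ← Finset.mul_sum]
    ring
  have hterm : ∀ j ∈ Finset.range n, 0 ≤ |dA n A i j| - dA n A i j := fun j _ =>
    sub_nonneg.mpr (le_abs_self _)
  have hnn : 0 ≤ ∑ j ∈ Finset.range n, (|dA n A i j| - dA n A i j) :=
    Finset.sum_nonneg hterm
  refine ⟨by omega, ?_⟩
  rw [key]
  constructor
  · intro h j hj
    have hz : ∑ j ∈ Finset.range n, (|dA n A i j| - dA n A i j) = 0 := by omega
    have := (Finset.sum_eq_zero_iff_of_nonneg hterm).mp hz j (Finset.mem_range.mpr hj)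
    have := le_abs_self (dA n A i j)
    have habs := abs_nonneg (dA n A i j)
    omega
  · intro h
    have hz : ∑ j ∈ Finset.range n, (|dA n A i j| - dA n A i j) = 0 :=
      Finset.sum_eq_zero (fun j hj => by
        rw [abs_of_nonneg (h j (Finset.mem_range.mp hj))]; ring)
    rw [hz]; ring

lemma col_bound (n : ℕ) (hn : 1 ≤ n) (B : ℕ → ℕ → ℤ) (j : ℕ)
    (hB : ∀ i < n - 1, B i j = -1 ∨ B i j = 1) :
    4 ≤ ∑ i ∈ Finset.range n, (dB n B i j) ^ 2 ∧
    (∑ i ∈ Finset.range n, (dB n B i j) ^ 2 = 4 ↔ ∀ i < n, 0 ≤ dB n B i j) := by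
  have hg := gB_spin n B j hB
  have hsq : ∀ i, (dB n B i j) ^ 2 = 2 * |dB n B i j| := fun i =>
    spin_sq _ _ (hg i) (hg (i + 1))
  have htel : ∑ i ∈ Finset.range n, dB n B i j = 2 := by
    unfold dB
    rw [Finset.sum_range_sub' (fun i => gB n B i j)]
    have h0 : gB n B 0 j = 1 := by unfold gB; simp
    have hn' : gB n B n j = -1 := by
      unfold gB; rw [if_neg (by omega), if_neg (by omega)]
    rw [h0, hn']; ring
  have key : ∑ i ∈ Finset.range n, (dB n B i j) ^ 2
      = 4 + 2 * ∑ i ∈ Finset.range n, (|dB n B i j| - dB n B i j) := by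
    simp_rw [hsq]
    rw [Finset.sum_sub_distrib, htel, ← Finset.mul_sum]
    ring
  have hterm : ∀ i ∈ Finset.range n, 0 ≤ |dB n B i j| - dB n B i j := fun i _ =>
    sub_nonneg.mpr (le_abs_self _)
  have hnn : 0 ≤ ∑ i ∈ Finset.range n, (|dB n B i j| - dB n B i j) :=
    Finset.sum_nonneg hterm
  refine ⟨by omega, ?_⟩
  rw [key]
  constructor
  · intro h i hi
    have hz : ∑ i ∈ Finset.range n, (|dB n B i j| - dB n B i j) = 0 := by omega
    have := (Finset.sum_eq_zero_iff_of_nonneg hterm).mp hz i (Finset.mem_range.mpr hi)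
    have := le_abs_self (dB n B i j)
    have habs := abs_nonneg (dB n B i j)
    omega
  · intro h
    have hz : ∑ i ∈ Finset.range n, (|dB n B i j| - dB n B i j) = 0 :=
      Finset.sum_eq_zero (fun i hi => by
        rw [abs_of_nonneg (h i (Finset.mem_range.mp hi))]; ring)
    rw [hz]; ring

lemma rowdw_iff (n : ℕ) (hn : 1 ≤ n) (A : ℕ → ℕ → ℤ)
    (hA : ∀ i < n, ∀ j < n - 1, A i j = -1 ∨ A i j = 1) :
    RowDW n n A ↔ ∀ i < n, ∀ j < n, 0 ≤ dA n A i j := by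
  constructor
  · intro h i hi j hj
    obtain ⟨t, ht, hprop⟩ := h i hi
    have hform : ∀ k ≤ n, gA n A i k = if k ≤ t then 1 else -1 := by
      intro k hk
      unfold gA
      split_ifs with h1 h2 h3 h3
      · rfl
      · omega
      · exact (hprop (k - 1) (by omega)).1 (by omega)
      · exact (hprop (k - 1) (by omega)).2 (by omega)
      · omega
      · rfl
    unfold dA
    rw [hform j (by omega), hform (j + 1) (by omega)]
    split_ifs <;> omega
  · intro h i hi
    have hstep : ∀ k < n, gA n A i (k + 1) ≤ gA n A i k := by
      intro k hk
      have := h i hi k hk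
      unfold dA at this
      omega
    have hmono : ∀ b ≤ n, ∀ a ≤ b, gA n A i b ≤ gA n A i a := by
      intro b
      induction b with
      | zero =>
        intro _ a ha
        have : a = 0 := by omega
        simp [this]
      | succ k ih =>
        intro hb a ha
        rcases Nat.lt_or_ge a (k + 1) with h' | h'
        · exact le_trans (hstep k (by omega)) (ih (by omega) a (by omega))
        · have : a = k + 1 := by omega
          simp [this]
    by_cases hex : ∃ j, j < n - 1 ∧ A i j = -1
    · refine ⟨Nat.find hex, by have := Nat.find_spec hex; omega, ?_⟩
      intro j hj
      constructor
      · intro hjt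
        rcases hA i hi j hj with h' | h'
        · exact absurd ⟨hj, h'⟩ (Nat.find_min hex hjt)
        · exact h'
      · intro hjt
        have hspec := Nat.find_spec hex
        set t := Nat.find hex
        have hgt : gA n A i (t + 1) = -1 := by
          unfold gA
          rw [if_neg (by omega), if_pos (by omega)]
          simpa using hspec.2
        have hgj : gA n A i (j + 1) = A i j := by
          unfold gA
          rw [if_neg (by omega), if_pos (by omega)]
          simp
        have hle : gA n A i (j + 1) ≤ gA n A i (t + 1) :=
          hmono (j + 1) (by omega) (t + 1) (by omega)
        rcases hA i hi j hj with h' | h'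
        · exact h'
        · rw [hgj, hgt, h'] at hle; omega
    · push_neg at hex
      refine ⟨n - 1, le_refl _, ?_⟩
      intro j hj
      constructor
      · intro _
        rcases hA i hi j hj with h' | h'
        · exact absurd h' (hex j hj)
        · exact h'
      · intro hjt; omega

lemma coldw_iff (n : ℕ) (hn : 1 ≤ n) (B : ℕ → ℕ → ℤ)
    (hB : ∀ i < n - 1, ∀ j < n, B i j = -1 ∨ B i j = 1) :
    ColDW n n B ↔ ∀ j < n, ∀ i < n, 0 ≤ dB n B i j := by
  constructor
  · intro h j hj i hi
    obtain ⟨t, ht, hprop⟩ := h j hj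
    have hform : ∀ k ≤ n, gB n B k j = if k ≤ t then 1 else -1 := by
      intro k hk
      unfold gB
      split_ifs with h1 h2 h3 h3
      · rfl
      · omega
      · exact (hprop (k - 1) (by omega)).1 (by omega)
      · exact (hprop (k - 1) (by omega)).2 (by omega)
      · omega
      · rfl
    unfold dB
    rw [hform i (by omega), hform (i + 1) (by omega)]
    split_ifs <;> omega
  · intro h j hj
    have hstep : ∀ k < n, gB n B (k + 1) j ≤ gB n B k j := by
      intro k hk
      have := h j hj k hk
      unfold dB at this
      omega
    have hmono : ∀ b ≤ n, ∀ a ≤ b, gB n B b j ≤ gB n B a j := by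
      intro b
      induction b with
      | zero =>
        intro _ a ha
        have : a = 0 := by omega
        simp [this]
      | succ k ih =>
        intro hb a ha
        rcases Nat.lt_or_ge a (k + 1) with h' | h'
        · exact le_trans (hstep k (by omega)) (ih (by omega) a (by omega))
        · have : a = k + 1 := by omega
          simp [this]
    by_cases hex : ∃ i, i < n - 1 ∧ B i j = -1
    · refine ⟨Nat.find hex, by have := Nat.find_spec hex; omega, ?_⟩
      intro i hi
      constructor
      · intro hit
        rcases hB i hi j hj with h' | h'
        · exact absurd ⟨hi, h'⟩ (Nat.find_min hex hit)
        · exact h'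
      · intro hit
        have hspec := Nat.find_spec hex
        set t := Nat.find hex
        have hgt : gB n B (t + 1) j = -1 := by
          unfold gB
          rw [if_neg (by omega), if_pos (by omega)]
          simpa using hspec.2
        have hgi : gB n B (i + 1) j = B i j := by
          unfold gB
          rw [if_neg (by omega), if_pos (by omega)]
          simp
        have hle : gB n B (i + 1) j ≤ gB n B (t + 1) j :=
          hmono (i + 1) (by omega) (t + 1) (by omega)
        rcases hB i hi j hj with h' | h'
        · exact h'
        · rw [hgi, hgt, h'] at hle; omega
    · push_neg at hex
      refine ⟨n - 1, le_refl _, ?_⟩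
      intro i hi
      constructor
      · intro _
        rcases hB i hi j hj with h' | h'
        · exact absurd h' (hex i hi)
        · exact h'
      · intro hit; omega

/-- For an `n × (n-1)` spin matrix `A`, an `(n-1) × n` spin matrix `B` (with guard qubits)
and an `n × n` spin matrix `S`, the Hamiltonian `H_eⁿⁿ(A,B,S)` is at least `4n`, and
equals `4n` iff every guard-extended row of `A` is a spin domain-wall vector, every
guard-extended column of `B` is a spin domain-wall vector, `Δa_{i,j} = Δb_{i,j}` for all
`i, j`, and `s_{i,j} + 1 = Δa_{i,j}` for all `i, j`. -/
theorem extended_dual_matrix_hamiltonian (n : ℕ) (hn : 1 ≤ n) (A B S : ℕ → ℕ → ℤ)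
    (hA : ∀ i < n, ∀ j < n - 1, A i j = -1 ∨ A i j = 1)
    (hB : ∀ i < n - 1, ∀ j < n, B i j = -1 ∨ B i j = 1)
    (hS : ∀ i < n, ∀ j < n, S i j = -1 ∨ S i j = 1) :
    (4 * n : ℚ) ≤ He n A B S ∧
    (He n A B S = 4 * n ↔
      RowDW n n A ∧ ColDW n n B ∧
      (∀ i < n, ∀ j < n, dA n A i j = dB n B i j) ∧
      (∀ i < n, ∀ j < n, S i j + 1 = dA n A i j)) := by
  classical
  have row := fun i (hi : i < n) => row_bound n hn A i (hA i hi)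
  have col := fun j (hj : j < n) => col_bound n hn B j (fun i hi => hB i hi j hj)
  set T1 := ∑ i ∈ Finset.range n, ∑ j ∈ Finset.range n, (dA n A i j) ^ 2 with hT1def
  set T2 := ∑ i ∈ Finset.range n, ∑ j ∈ Finset.range n, (dB n B i j) ^ 2 with hT2def
  set T3 := ∑ i ∈ Finset.range n, ∑ j ∈ Finset.range n,
    ((S i j + 1) - dA n A i j) ^ 2 with hT3def
  set T4 := ∑ i ∈ Finset.range n, ∑ j ∈ Finset.range n,
    ((S i j + 1) - dB n B i j) ^ 2 with hT4def
  have hT2comm : T2 = ∑ j ∈ Finset.range n, ∑ i ∈ Finset.range n, (dB n B i j) ^ 2 := by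
    rw [hT2def, Finset.sum_comm]
  have hT1ge : 4 * (n : ℤ) ≤ T1 := by
    rw [hT1def]
    have h := Finset.sum_le_sum (fun i hi => (row i (Finset.mem_range.mp hi)).1)
      (s := Finset.range n) (f := fun _ => (4 : ℤ))
    simpa [Finset.sum_const, Finset.card_range, mul_comm] using h
  have hT2ge : 4 * (n : ℤ) ≤ T2 := by
    rw [hT2comm]
    have h := Finset.sum_le_sum (fun j hj => (col j (Finset.mem_range.mp hj)).1)
      (s := Finset.range n) (f := fun _ => (4 : ℤ))
    simpa [Finset.sum_const, Finset.card_range, mul_comm] using h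
  have hT3ge : 0 ≤ T3 := by
    rw [hT3def]
    exact Finset.sum_nonneg fun i _ => Finset.sum_nonneg fun j _ => sq_nonneg _
  have hT4ge : 0 ≤ T4 := by
    rw [hT4def]
    exact Finset.sum_nonneg fun i _ => Finset.sum_nonneg fun j _ => sq_nonneg _
  have hT1eq : T1 = 4 * (n : ℤ) ↔ ∀ i < n, ∀ j < n, 0 ≤ dA n A i j := by
    constructor
    · intro h i hi j hj
      have hz : ∑ i ∈ Finset.range n,
          ((∑ j ∈ Finset.range n, (dA n A i j) ^ 2) - 4) = 0 := by
        rw [Finset.sum_sub_distrib, ← hT1def, h, Finset.sum_const, Finset.card_range,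
          nsmul_eq_mul]
        ring
      have h4 := (Finset.sum_eq_zero_iff_of_nonneg
        (fun i hi => sub_nonneg.mpr (row i (Finset.mem_range.mp hi)).1)).mp hz i
        (Finset.mem_range.mpr hi)
      exact ((row i hi).2.mp (by omega)) j hj
    · intro h
      rw [hT1def, Finset.sum_congr rfl
        (fun i hi => (row i (Finset.mem_range.mp hi)).2.mpr (h i (Finset.mem_range.mp hi)))]
      simp [Finset.sum_const, Finset.card_range, mul_comm]
  have hT2eq : T2 = 4 * (n : ℤ) ↔ ∀ j < n, ∀ i < n, 0 ≤ dB n B i j := by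
    rw [hT2comm]
    constructor
    · intro h j hj i hi
      have hz : ∑ j ∈ Finset.range n,
          ((∑ i ∈ Finset.range n, (dB n B i j) ^ 2) - 4) = 0 := by
        rw [Finset.sum_sub_distrib, h, Finset.sum_const, Finset.card_range, nsmul_eq_mul]
        ring
      have h4 := (Finset.sum_eq_zero_iff_of_nonneg
        (fun j hj => sub_nonneg.mpr (col j (Finset.mem_range.mp hj)).1)).mp hz j
        (Finset.mem_range.mpr hj)
      exact ((col j hj).2.mp (by omega)) i hi
    · intro h
      rw [Finset.sum_congr rfl
        (fun j hj => (col j (Finset.mem_range.mp hj)).2.mpr (h j (Finset.mem_range.mp hj)))]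
      simp [Finset.sum_const, Finset.card_range, mul_comm]
  have hT3eq : T3 = 0 ↔ ∀ i < n, ∀ j < n, S i j + 1 = dA n A i j := by
    rw [hT3def]
    constructor
    · intro h i hi j hj
      have h1 := (Finset.sum_eq_zero_iff_of_nonneg
        (fun i _ => Finset.sum_nonneg fun j _ => sq_nonneg _)).mp h i
        (Finset.mem_range.mpr hi)
      have h2 := (Finset.sum_eq_zero_iff_of_nonneg
        (fun j _ => sq_nonneg _)).mp h1 j (Finset.mem_range.mpr hj)
      have := sq_eq_zero_iff.mp h2
      omega
    · intro h
      refine Finset.sum_eq_zero fun i hi => Finset.sum_eq_zero fun j hj => ?_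
      rw [h i (Finset.mem_range.mp hi) j (Finset.mem_range.mp hj)]
      ring
  have hT4eq : T4 = 0 ↔ ∀ i < n, ∀ j < n, S i j + 1 = dB n B i j := by
    rw [hT4def]
    constructor
    · intro h i hi j hj
      have h1 := (Finset.sum_eq_zero_iff_of_nonneg
        (fun i _ => Finset.sum_nonneg fun j _ => sq_nonneg _)).mp h i
        (Finset.mem_range.mpr hi)
      have h2 := (Finset.sum_eq_zero_iff_of_nonneg
        (fun j _ => sq_nonneg _)).mp h1 j (Finset.mem_range.mpr hj)
      have := sq_eq_zero_iff.mp h2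
      omega
    · intro h
      refine Finset.sum_eq_zero fun i hi => Finset.sum_eq_zero fun j hj => ?_
      rw [h i (Finset.mem_range.mp hi) j (Finset.mem_range.mp hj)]
      ring
  have hHe : He n A B S = ((T1 + T2 + T3 + T4 : ℤ) : ℚ) / 2 := by
    rw [hT1def, hT2def, hT3def, hT4def]
    unfold He
    push_cast
    ring
  constructor
  · rw [hHe]
    have h8 : (8 * (n : ℤ)) ≤ T1 + T2 + T3 + T4 := by linarith
    have hc := (@Int.cast_le ℚ _ _ _).mpr h8
    push_cast at hc ⊢
    linarith
  · have hkey : He n A B S = 4 * n ↔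
        (T1 = 4 * (n : ℤ) ∧ T2 = 4 * (n : ℤ) ∧ T3 = 0 ∧ T4 = 0) := by
      rw [hHe, div_eq_iff (by norm_num : (2 : ℚ) ≠ 0),
        show (4 : ℚ) * n * 2 = ((8 * (n : ℤ) : ℤ) : ℚ) by push_cast; ring, Int.cast_inj]
      constructor
      · intro h
        refine ⟨by omega, by omega, by omega, by omega⟩
      · intro ⟨a, b, c, d⟩
        omega
    rw [hkey, hT1eq, hT2eq, hT3eq, hT4eq, rowdw_iff n hn A hA, coldw_iff n hn B hB]
    constructor
    · rintro ⟨ha, hb, hc, hd⟩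
      exact ⟨ha, hb, fun i hi j hj => by rw [← hc i hi j hj, ← hd i hi j hj], hc⟩
    · rintro ⟨ha, hb, he, hc⟩
      exact ⟨ha, hb, hc, fun i hi j hj => (hc i hi j hj).trans (he i hi j hj)⟩
end
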